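/- Let X be a viable semigroup and e ∈ E(X) an idempotent. Then E(X) ∩ ⇑e = ↑e and E(X) ∩ ⇓e = ↓e, where ↑e, ↓e are with respect to the natural partial order on idempotents and ⇑e, ⇓e are with respect to the binary quasiorder. -/

import Mathlib

/-- A homomorphism to the two-element semilattice as `Bool` with `min`. -/
def IsHom2 {X : Type*} [Semigroup X] (h : X → Bool) : Prop :=
  ∀ a b : X, h (a * b) = min (h a) (h b)

/-- The binary quasiorder `x ≲ y`. -/
def bq {X : Type*} [Semigroup X] (x y : X) : Prop :=
  ∀ h : X → Bool, IsHom2 h → h x ≤ h y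

/-- Rotation lemma: in a viable semigroup, if `a*b = e` with `e` idempotent,
then `(b*a)*(b*a) = e`. -/
private lemma CL1 {X : Type*} [Semigroup X]
    (viable : ∀ a b : X, (a * b) * (a * b) = a * b → (b * a) * (b * a) = b * a →
      a * b = b * a)
    (e : X) (he : e * e = e) (a b : X) (h : a * b = e) :
    (b * a) * (b * a) = e := by
  -- t³ = t²  where t = b*a
  have h3 : ((b * a) * (b * a)) * (b * a) = (b * a) * (b * a) := by
    have e1 : ((b * a) * (b * a)) * (b * a) = b * ((a * b) * ((a * b) * a)) := by
      simp only [mul_assoc]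
    have e2 : (b * a) * (b * a) = b * ((a * b) * a) := by
      simp only [mul_assoc]
    rw [e1, e2, h, ← mul_assoc e e a, he]
  have h4 : ((b * a) * (b * a)) * ((b * a) * (b * a)) = (b * a) * (b * a) := by
    have e1 : ((b * a) * (b * a)) * ((b * a) * (b * a))
        = (((b * a) * (b * a)) * (b * a)) * (b * a) := by
      simp only [mul_assoc]
    rw [e1, h3, h3]
  have huv : (a * (b * a)) * b = e := by
    have e1 : (a * (b * a)) * b = (a * b) * (a * b) := by simp only [mul_assoc]
    rw [e1, h, he]
  have hvu : b * (a * (b * a)) = (b * a) * (b * a) := by simp only [mul_assoc]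
  have hi1 : ((a * (b * a)) * b) * ((a * (b * a)) * b) = (a * (b * a)) * b := by
    rw [huv, he]
  have hi2 : (b * (a * (b * a))) * (b * (a * (b * a))) = b * (a * (b * a)) := by
    rw [hvu]; exact h4
  have hcomm := viable (a * (b * a)) b hi1 hi2
  rw [← hvu, ← hcomm, huv]

/-- If an idempotent `x` satisfies `u*x*v = e` for some `u v`, with `e` idempotent,
in a viable semigroup, then `e*x = e` and `x*e = e`. -/
private lemma master {X : Type*} [Semigroup X]
    (viable : ∀ a b : X, (a * b) * (a * b) = a * b → (b * a) * (b * a) = b * a →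
      a * b = b * a)
    (e x : X) (he : e * e = e) (hx : x * x = x)
    (u v : X) (huv : u * x * v = e) : e * x = e ∧ x * e = e := by
  have h1 : ((x * v) * u) * ((x * v) * u) = e :=
    CL1 viable e he u (x * v) (by rw [← mul_assoc]; exact huv)
  have h1' : x * ((v * u) * (x * (v * u))) = e := by
    rw [← h1]; simp only [mul_assoc]
  have h2 := CL1 viable e he x ((v * u) * (x * (v * u))) h1'
  -- h2 : ((vu*(x*vu))*x) * ((vu*(x*vu))*x) = e
  have hT : (((v * u) * (x * (v * u))) * x) * x = ((v * u) * (x * (v * u))) * x := by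
    rw [mul_assoc, hx]
  have hex : e * x = e := by rw [← h2, mul_assoc, hT]
  have hex_idem : (e * x) * (e * x) = e * x := by rw [hex]; exact he
  have hxe_idem : (x * e) * (x * e) = x * e := by
    have e1 : (x * e) * (x * e) = x * ((e * x) * e) := by simp only [mul_assoc]
    rw [e1, hex, he]
  have hcomm := viable e x hex_idem hxe_idem
  constructor
  · exact hex
  · rw [← hcomm]; exact hex

private lemma key {X : Type*} [Semigroup X]
    (viable : ∀ a b : X, (a * b) * (a * b) = a * b → (b * a) * (b * a) = b * a →
      a * b = b * a)
    (e x : X) (he : e * e = e) (hx : x * x = x) :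
    bq e x ↔ (e * x = e ∧ x * e = e) := by
  classical
  constructor
  · intro hbq
    set U : X → Prop := fun z => ∃ u v : X, u * z * v = e with hUdef
    have hUe : U e := ⟨e, e, by rw [he, he]⟩
    have hmulU : ∀ a b : X, U (a * b) ↔ (U a ∧ U b) := by
      intro a b
      constructor
      · rintro ⟨u, v, hab⟩
        refine ⟨⟨u, b * v, ?_⟩, ⟨u * a, v, ?_⟩⟩
        · have e1 : u * a * (b * v) = u * (a * b) * v := by simp only [mul_assoc]
          rw [e1]; exact hab
        · have e1 : u * a * b * v = u * (a * b) * v := by simp only [mul_assoc]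
          rw [e1]; exact hab
      · rintro ⟨⟨u, v, hu⟩, ⟨p, q, hp⟩⟩
        have h1 : (v * (u * a)) * (v * (u * a)) = e :=
          CL1 viable e he (u * a) v hu
        have h2 : ((b * q) * p) * ((b * q) * p) = e :=
          CL1 viable e he p (b * q) (by rw [← mul_assoc]; exact hp)
        refine ⟨v * u * a * (v * u), q * p * (b * (q * p)), ?_⟩
        have e1 : v * u * a * (v * u) * (a * b) * (q * p * (b * (q * p)))
            = ((v * (u * a)) * (v * (u * a))) * (((b * q) * p) * ((b * q) * p)) := by
          simp only [mul_assoc]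
        rw [e1, h1, h2, he]
    have hhom : IsHom2 (fun z => decide (U z)) := by
      intro a b
      simp only
      by_cases ha : U a <;> by_cases hb : U b
      · rw [decide_eq_true ha, decide_eq_true hb,
          decide_eq_true ((hmulU a b).mpr ⟨ha, hb⟩)]
        decide
      · rw [decide_eq_true ha, decide_eq_false hb,
          decide_eq_false (fun h => hb ((hmulU a b).mp h).2)]
        decide
      · rw [decide_eq_false ha, decide_eq_true hb,
          decide_eq_false (fun h => ha ((hmulU a b).mp h).1)]
        decide
      · rw [decide_eq_false ha, decide_eq_false hb,
          decide_eq_false (fun h => ha ((hmulU a b).mp h).1)]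
        decide
    have hle := hbq (fun z => decide (U z)) hhom
    rw [decide_eq_true hUe] at hle
    have hUx : U x := by
      by_contra hc
      rw [decide_eq_false hc] at hle
      exact absurd hle (by decide)
    obtain ⟨u, v, huxv⟩ := hUx
    exact master viable e x he hx u v huxv
  · rintro ⟨h1, h2⟩
    intro h hh
    have hm := hh e x
    rw [h1] at hm
    rw [hm]
    exact min_le_right _ _

/-- For a viable semigroup `X` and an idempotent `e`:
`E(X) ∩ ⇑e = ↑e` and `E(X) ∩ ⇓e = ↓e`, i.e. for an idempotent `x`,
`e ≲ x` iff `e ≤ x` (meaning `ex = xe = e`), and `x ≲ e` iff `x ≤ e`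
(meaning `xe = ex = x`). -/
theorem stmt18 {X : Type*} [Semigroup X]
    (viable : ∀ a b : X, (a * b) * (a * b) = a * b → (b * a) * (b * a) = b * a →
      a * b = b * a)
    (e : X) (he : e * e = e) :
    ∀ x : X, x * x = x →
      (bq e x ↔ (e * x = e ∧ x * e = e)) ∧
        (bq x e ↔ (x * e = x ∧ e * x = x)) := by
  intro x hx
  exact ⟨key viable e x he hx, key viable x e hx he⟩
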